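/- arXiv:2409.01845 — 3 statements merged into one kernel-verified Lean document; each statement's English description precedes it below -/
import Mathlib

section
/- With λ = (1/n) Σ_{j,r} p_{j,r} and S_n the random diagonal sum, the variance satisfies Var(S_n) = λ − (n/(n-1)) ( Σ_j (p̄_{j,·})² + Σ_r (p̄_{·,r})² − (1/n²) Σ_{(j,r)} p_{j,r}² − λ²/n ), where p̄_{j,·} = (1/n)Σ_r p_{j,r} and p̄_{·,r} = (1/n)Σ_j p_{j,r}. -/
open Finset Real

section Aux

variable {α : Type*} [Fintype α] [DecidableEq α]

lemma my_bern_sum (P : α → ℝ) (s : Finset α) :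
    ∑ x : α → Bool, (∏ i, (if x i then P i else 1 - P i)) * (∏ i ∈ s, (if x i then (1:ℝ) else 0))
      = ∏ i ∈ s, P i := by
  have h1 : ∀ x : α → Bool, (∏ i, (if x i then P i else 1 - P i)) * (∏ i ∈ s, (if x i then (1:ℝ) else 0))
      = ∏ i, ((if x i then P i else 1 - P i) * (if i ∈ s then (if x i then (1:ℝ) else 0) else 1)) := by
    intro x
    rw [Finset.prod_mul_distrib]
    congr 1
    rw [← Finset.prod_filter]
    congr 1
    simp [Finset.filter_mem_eq_inter]
  simp_rw [h1]
  have h2 := Finset.prod_univ_sum (fun _ : α => (Finset.univ : Finset Bool))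
    (fun i b => (if b then P i else 1 - P i) * (if i ∈ s then (if b then (1:ℝ) else 0) else 1))
  rw [Fintype.piFinset_univ] at h2
  rw [← h2]
  have h3 : ∀ i : α, (∑ b : Bool, (if b then P i else 1 - P i) * (if i ∈ s then (if b then (1:ℝ) else 0) else 1)) = if i ∈ s then P i else 1 := by
    intro i
    rw [Fintype.sum_bool]
    by_cases h : i ∈ s <;> simp [h]
  simp_rw [h3]
  rw [Finset.prod_ite_mem, Finset.univ_inter]

lemma my_card_fix1 (j : α) :
    Fintype.card {σ : Equiv.Perm α // σ j = j} = (Fintype.card α - 1).factorial := by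
  have e1 : Equiv.Perm {a : α // a ≠ j} ≃ {σ : Equiv.Perm α // σ j = j} :=
    (Equiv.Perm.subtypeEquivSubtypePerm (fun a => a ≠ j)).trans
      (Equiv.subtypeEquivRight (fun σ => by
        constructor
        · intro h; exact h j (by simp)
        · intro h a ha; simp only [not_not] at ha; subst ha; exact h))
  rw [← Fintype.card_congr e1, Fintype.card_perm, Fintype.card_subtype_compl]
  simp

lemma my_card_fiber1 (j r : α) :
    (Finset.univ.filter fun σ : Equiv.Perm α => σ j = r).card
      = (Fintype.card α - 1).factorial := by
  have e : {σ : Equiv.Perm α // σ j = r} ≃ {σ : Equiv.Perm α // σ j = j} :=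
  { toFun := fun σ => ⟨σ.1.trans (Equiv.swap j r), by simp [σ.2]⟩
    invFun := fun σ => ⟨σ.1.trans (Equiv.swap j r), by simp [σ.2]⟩
    left_inv := fun σ => by ext a; simp
    right_inv := fun σ => by ext a; simp }
  rw [← Fintype.card_subtype, Fintype.card_congr e, my_card_fix1]

lemma my_card_fix2 (j k : α) (hjk : j ≠ k) :
    Fintype.card {σ : Equiv.Perm α // σ j = j ∧ σ k = k} = (Fintype.card α - 2).factorial := by
  have e1 : Equiv.Perm {a : α // ¬(a = j ∨ a = k)} ≃ {σ : Equiv.Perm α // σ j = j ∧ σ k = k} :=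
    (Equiv.Perm.subtypeEquivSubtypePerm (fun a => ¬(a = j ∨ a = k))).trans
      (Equiv.subtypeEquivRight (fun σ => by
        constructor
        · intro h; exact ⟨h j (by simp), h k (by simp)⟩
        · intro h a ha
          simp only [not_not] at ha
          rcases ha with ha | ha <;> subst ha
          · exact h.1
          · exact h.2))
  rw [← Fintype.card_congr e1, Fintype.card_perm]
  congr 1
  rw [Fintype.card_subtype_compl]
  have h2 : Fintype.card {a : α // a = j ∨ a = k} = 2 := by
    rw [Fintype.card_subtype]
    have : Finset.univ.filter (fun a : α => a = j ∨ a = k) = {j, k} := by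
      ext a; simp [or_comm]
    rw [this, Finset.card_insert_of_notMem (by simp [hjk]), Finset.card_singleton]
  rw [h2]

lemma my_card_fiber2 (j k r s : α) (hjk : j ≠ k) (hrs : r ≠ s) :
    (Finset.univ.filter fun σ : Equiv.Perm α => σ j = r ∧ σ k = s).card
      = (Fintype.card α - 2).factorial := by
  set k1 := Equiv.swap j r k with hk1
  have hk1r : k1 ≠ r := by
    simp only [hk1, Ne, Equiv.swap_apply_eq_iff, Equiv.swap_apply_right]
    exact hjk.symm
  set pp : Equiv.Perm α := (Equiv.swap j r).trans (Equiv.swap k1 s) with hpp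
  have hppj : pp j = r := by
    simp only [hpp, Equiv.trans_apply, Equiv.swap_apply_left]
    exact Equiv.swap_apply_of_ne_of_ne hk1r.symm hrs
  have hppk : pp k = s := by simp [hpp, hk1]
  have e : {σ : Equiv.Perm α // σ j = r ∧ σ k = s} ≃ {σ : Equiv.Perm α // σ j = j ∧ σ k = k} :=
  { toFun := fun σ => ⟨σ.1.trans pp.symm, by
      constructor
      · have := σ.2.1; simp [this, ← hppj]
      · have := σ.2.2; simp [this, ← hppk]⟩
    invFun := fun σ => ⟨σ.1.trans pp, by
      constructor
      · have := σ.2.1; simp [this, hppj]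
      · have := σ.2.2; simp [this, hppk]⟩
    left_inv := fun σ => by ext a; simp
    right_inv := fun σ => by ext a; simp }
  rw [← Fintype.card_subtype, Fintype.card_congr e, my_card_fix2 j k hjk]

lemma my_perm_sum1 (f : α → ℝ) (j : α) :
    ∑ σ : Equiv.Perm α, f (σ j) = ((Fintype.card α - 1).factorial : ℝ) * ∑ r, f r := by
  have h : ∀ σ : Equiv.Perm α, f (σ j) = ∑ r, if σ j = r then f r else 0 := by
    intro σ; rw [Finset.sum_ite_eq]; simp
  simp_rw [h]
  rw [Finset.sum_comm, Finset.mul_sum]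
  refine Finset.sum_congr rfl fun r _ => ?_
  rw [← Finset.sum_filter, Finset.sum_const, my_card_fiber1 j r]
  simp [mul_comm]

lemma my_perm_sum2 (g : α → α → ℝ) (j k : α) (hjk : j ≠ k) :
    ∑ σ : Equiv.Perm α, g (σ j) (σ k)
      = ((Fintype.card α - 2).factorial : ℝ) * ∑ r, ∑ s, if r = s then 0 else g r s := by
  have h : ∀ σ : Equiv.Perm α, g (σ j) (σ k) = ∑ r, ∑ s, if σ j = r ∧ σ k = s then g r s else 0 := by
    intro σ
    rw [Finset.sum_comm]
    rw [Finset.sum_eq_single (σ k)]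
    · rw [Finset.sum_eq_single (σ j)]
      · simp
      · intro b _ hb; simp only [ite_eq_right_iff, and_imp]
        intro h' _; exact absurd h'.symm hb
      · simp
    · intro b _ hb
      apply Finset.sum_eq_zero; intro a _
      simp only [ite_eq_right_iff, and_imp]
      intro _ h'; exact absurd h'.symm hb
    · simp
  simp_rw [h]
  rw [Finset.sum_comm, Finset.mul_sum]
  refine Finset.sum_congr rfl fun r _ => ?_
  rw [Finset.sum_comm, Finset.mul_sum]
  refine Finset.sum_congr rfl fun s _ => ?_
  by_cases hrs : r = s
  · subst hrs
    rw [if_pos rfl, mul_zero]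
    apply Finset.sum_eq_zero; intro σ _
    rw [if_neg]
    rintro ⟨h1, h2⟩
    exact hjk (σ.injective (h1.trans h2.symm))
  · rw [if_neg hrs, ← Finset.sum_filter, Finset.sum_const, my_card_fiber2 j k r s hjk hrs]
    simp [mul_comm]

lemma my_sum_ite_ne (f : α → ℝ) (j : α) :
    ∑ k, (if j = k then 0 else f k) = (∑ k, f k) - f j := by
  have h : ∀ k, (if j = k then (0:ℝ) else f k) = f k - (if j = k then f k else 0) := by
    intro k; by_cases hh : j = k <;> simp [hh]
  simp_rw [h]
  rw [Finset.sum_sub_distrib, Finset.sum_ite_eq, if_pos (Finset.mem_univ j)]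

end Aux

/-- Probability weight of an outcome `x` of the Bernoulli matrix `(X_{j,r})` with
success probabilities `p`, the entries being independent. -/
noncomputable def bw (n : ℕ) (p : Fin n → Fin n → ℝ) (x : Fin n → Fin n → Bool) : ℝ :=
  ∏ j : Fin n, ∏ r : Fin n, if x j r then p j r else 1 - p j r

/-- Expectation of `f (X, pp)` where the Bernoulli matrix `X` (independent entries with
success probabilities `p`) and the uniformly distributed random permutation `pp` are
independent. -/
noncomputable def dExp (n : ℕ) (p : Fin n → Fin n → ℝ)
    (f : (Fin n → Fin n → Bool) → Equiv.Perm (Fin n) → ℝ) : ℝ :=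
  ((n.factorial : ℝ))⁻¹ *
    ∑ σ : Equiv.Perm (Fin n), ∑ x : Fin n → Fin n → Bool, bw n p x * f x σ

/-- The random diagonal sum `S_n = ∑ j, X_{j,pp(j)}` as a function of the outcome. -/
noncomputable def dSum (n : ℕ) (x : Fin n → Fin n → Bool) (σ : Equiv.Perm (Fin n)) : ℝ :=
  ∑ j : Fin n, if x j (σ j) then (1:ℝ) else 0

/-- The variance of the random diagonal sum `S_n`. -/
noncomputable def dVar (n : ℕ) (p : Fin n → Fin n → ℝ) : ℝ :=
  dExp n p (fun x σ => (dSum n x σ)^2) - (dExp n p (dSum n))^2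

lemma my_bw_sum (n : ℕ) (p : Fin n → Fin n → ℝ) (s : Finset (Fin n × Fin n)) :
    ∑ x : Fin n → Fin n → Bool, bw n p x * ∏ i ∈ s, (if x i.1 i.2 then (1:ℝ) else 0)
      = ∏ i ∈ s, p i.1 i.2 := by
  rw [← my_bern_sum (fun i : Fin n × Fin n => p i.1 i.2) s]
  apply Fintype.sum_equiv (Equiv.curry (Fin n) (Fin n) Bool).symm
  intro x
  congr 1
  · rw [bw]
    conv_rhs => rw [Fintype.prod_prod_type]
    rfl

lemma my_bw_one (n : ℕ) (p : Fin n → Fin n → ℝ) (j r : Fin n) :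
    ∑ x : Fin n → Fin n → Bool, bw n p x * (if x j r then (1:ℝ) else 0) = p j r := by
  have h := my_bw_sum n p {(j, r)}
  simpa using h

lemma my_bw_two (n : ℕ) (p : Fin n → Fin n → ℝ) {a b : Fin n × Fin n} (hab : a ≠ b) :
    ∑ x : Fin n → Fin n → Bool,
      bw n p x * ((if x a.1 a.2 then (1:ℝ) else 0) * (if x b.1 b.2 then (1:ℝ) else 0))
      = p a.1 a.2 * p b.1 b.2 := by
  have h := my_bw_sum n p {a, b}
  simp_rw [Finset.prod_pair hab] at h
  exact h

theorem var_diag_sum_formula (n : ℕ) (hn : 2 ≤ n) (p : Fin n → Fin n → ℝ)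
    (hp : ∀ j r, p j r ∈ Set.Icc (0:ℝ) 1) :
    dVar n p
      = (n:ℝ)⁻¹ * (∑ j : Fin n, ∑ r : Fin n, p j r)
        - ((n:ℝ) / ((n:ℝ) - 1)) *
            (∑ j : Fin n, ((n:ℝ)⁻¹ * ∑ r : Fin n, p j r)^2
             + ∑ r : Fin n, ((n:ℝ)⁻¹ * ∑ j : Fin n, p j r)^2
             - ((n:ℝ)^2)⁻¹ * ∑ j : Fin n, ∑ r : Fin n, (p j r)^2
             - ((n:ℝ)⁻¹ * ∑ j : Fin n, ∑ r : Fin n, p j r)^2 / n) := by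
  classical
  set P : ℝ := ∑ j : Fin n, ∑ r : Fin n, p j r with hP
  set A : ℝ := ∑ j : Fin n, (∑ r : Fin n, p j r)^2 with hA
  set B : ℝ := ∑ r : Fin n, (∑ j : Fin n, p j r)^2 with hB
  set Q : ℝ := ∑ j : Fin n, ∑ r : Fin n, (p j r)^2 with hQ
  set T : ℝ := ∑ j : Fin n, ∑ k : Fin n,
      (if j = k then 0 else ∑ r : Fin n, ∑ s : Fin n,
        (if r = s then 0 else p j r * p k s)) with hT
  -- first moment, inner sum over x
  have hx1 : ∀ σ : Equiv.Perm (Fin n),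
      ∑ x : Fin n → Fin n → Bool, bw n p x * dSum n x σ = ∑ j, p j (σ j) := by
    intro σ
    unfold dSum
    simp_rw [Finset.mul_sum]
    rw [Finset.sum_comm]
    exact Finset.sum_congr rfl fun j _ => my_bw_one n p j (σ j)
  -- first moment
  have hE1 : dExp n p (dSum n)
      = ((n.factorial : ℝ))⁻¹ * (((n-1).factorial : ℝ) * P) := by
    unfold dExp
    congr 1
    calc ∑ σ : Equiv.Perm (Fin n), ∑ x : Fin n → Fin n → Bool, bw n p x * dSum n x σ
        = ∑ σ : Equiv.Perm (Fin n), ∑ j, p j (σ j) :=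
          Finset.sum_congr rfl fun σ _ => hx1 σ
      _ = ∑ j, ∑ σ : Equiv.Perm (Fin n), p j (σ j) := Finset.sum_comm
      _ = ∑ j, (((n-1).factorial : ℝ) * ∑ r, p j r) := by
          refine Finset.sum_congr rfl fun j _ => ?_
          have h := my_perm_sum1 (fun r => p j r) j
          simpa [Fintype.card_fin] using h
      _ = ((n-1).factorial : ℝ) * P := by rw [hP, Finset.mul_sum]
  -- second moment, inner sum over x
  have hx2 : ∀ σ : Equiv.Perm (Fin n),
      ∑ x : Fin n → Fin n → Bool, bw n p x * (dSum n x σ)^2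
        = (∑ j, p j (σ j)) + ∑ j, ∑ k, (if j = k then 0 else p j (σ j) * p k (σ k)) := by
    intro σ
    have hsq : ∀ x : Fin n → Fin n → Bool, (dSum n x σ)^2
        = ∑ j, ∑ k, (if x j (σ j) then (1:ℝ) else 0) * (if x k (σ k) then (1:ℝ) else 0) := by
      intro x; rw [sq, dSum, Finset.sum_mul_sum]
    simp_rw [hsq, Finset.mul_sum]
    rw [Finset.sum_comm]
    have key : ∀ j, (∑ x : Fin n → Fin n → Bool, ∑ k, bw n p x *
        ((if x j (σ j) then (1:ℝ) else 0) * (if x k (σ k) then (1:ℝ) else 0)))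
        = ∑ k, (if j = k then p j (σ j) else p j (σ j) * p k (σ k)) := by
      intro j
      rw [Finset.sum_comm]
      refine Finset.sum_congr rfl fun k _ => ?_
      by_cases hjk : j = k
      · subst hjk
        rw [if_pos rfl]
        have hb : ∀ b : Bool, ((if b then (1:ℝ) else 0) * (if b then (1:ℝ) else 0))
            = if b then (1:ℝ) else 0 := by intro b; cases b <;> simp
        simp_rw [hb]
        exact my_bw_one n p j (σ j)
      · rw [if_neg hjk]
        have hab : ((j, σ j) : Fin n × Fin n) ≠ (k, σ k) := by
          intro h; exact hjk (congrArg Prod.fst h)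
        exact my_bw_two n p hab
    rw [Finset.sum_congr rfl fun j _ => key j]
    have hsplit : ∀ j k : Fin n, (if j = k then p j (σ j) else p j (σ j) * p k (σ k))
        = (if j = k then p j (σ j) else 0) + (if j = k then 0 else p j (σ j) * p k (σ k)) := by
      intro j k; by_cases h : j = k <;> simp [h]
    simp_rw [hsplit, Finset.sum_add_distrib, Finset.sum_ite_eq, Finset.mem_univ, if_pos]
  -- second moment
  have hE2 : dExp n p (fun x σ => (dSum n x σ)^2)
      = ((n.factorial : ℝ))⁻¹ * (((n-1).factorial : ℝ) * P + ((n-2).factorial : ℝ) * T) := by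
    unfold dExp
    congr 1
    rw [Finset.sum_congr rfl fun σ _ => hx2 σ, Finset.sum_add_distrib]
    congr 1
    · calc ∑ σ : Equiv.Perm (Fin n), ∑ j, p j (σ j)
          = ∑ j, ∑ σ : Equiv.Perm (Fin n), p j (σ j) := Finset.sum_comm
        _ = ∑ j, (((n-1).factorial : ℝ) * ∑ r, p j r) := by
            refine Finset.sum_congr rfl fun j _ => ?_
            have h := my_perm_sum1 (fun r => p j r) j
            simpa [Fintype.card_fin] using h
        _ = ((n-1).factorial : ℝ) * P := by rw [hP, Finset.mul_sum]
    · calc ∑ σ : Equiv.Perm (Fin n), ∑ j, ∑ k, (if j = k then 0 else p j (σ j) * p k (σ k))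
          = ∑ j, ∑ σ : Equiv.Perm (Fin n), ∑ k, (if j = k then 0 else p j (σ j) * p k (σ k)) :=
            Finset.sum_comm
        _ = ∑ j, ∑ k, ∑ σ : Equiv.Perm (Fin n), (if j = k then 0 else p j (σ j) * p k (σ k)) :=
            Finset.sum_congr rfl fun j _ => Finset.sum_comm
        _ = ∑ j, ∑ k, (if j = k then 0 else ((n-2).factorial : ℝ) *
              ∑ r, ∑ s, (if r = s then 0 else p j r * p k s)) := by
            refine Finset.sum_congr rfl fun j _ => Finset.sum_congr rfl fun k _ => ?_
            by_cases hjk : j = k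
            · simp [hjk]
            · rw [if_neg hjk]
              simp_rw [if_neg hjk]
              have h := my_perm_sum2 (fun r s => p j r * p k s) j k hjk
              simpa [Fintype.card_fin] using h
        _ = ((n-2).factorial : ℝ) * T := by
            rw [hT, Finset.mul_sum]
            refine Finset.sum_congr rfl fun j _ => ?_
            rw [Finset.mul_sum]
            refine Finset.sum_congr rfl fun k _ => ?_
            by_cases hjk : j = k <;> simp [hjk]
  -- the combinatorial identity for T
  have expand : ∀ j k : Fin n, (∑ r, ∑ s, (if r = s then 0 else p j r * p k s))
      = (∑ r, p j r) * (∑ s, p k s) - ∑ r, p j r * p k r := by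
    intro j k
    simp_rw [my_sum_ite_ne]
    rw [Finset.sum_sub_distrib, ← Finset.sum_mul_sum]
  have hTval : T = P^2 - A - B + Q := by
    rw [hT]
    simp_rw [expand, my_sum_ite_ne]
    have hDB : ∑ j : Fin n, ∑ k : Fin n, ∑ r : Fin n, p j r * p k r = B := by
      calc ∑ j : Fin n, ∑ k : Fin n, ∑ r : Fin n, p j r * p k r
          = ∑ j : Fin n, ∑ r : Fin n, ∑ k : Fin n, p j r * p k r :=
            Finset.sum_congr rfl fun j _ => Finset.sum_comm
        _ = ∑ r : Fin n, ∑ j : Fin n, ∑ k : Fin n, p j r * p k r := Finset.sum_comm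
        _ = ∑ r : Fin n, (∑ j : Fin n, p j r) * (∑ k : Fin n, p k r) := by
            refine Finset.sum_congr rfl fun r _ => ?_
            rw [Finset.sum_mul_sum]
        _ = B := by rw [hB]; exact Finset.sum_congr rfl fun r _ => (sq _).symm
    rw [Finset.sum_sub_distrib]
    rw [show ∑ j : Fin n, ∑ k : Fin n, ((∑ r, p j r) * (∑ s, p k s) - ∑ r, p j r * p k r)
        = ∑ j : Fin n, ((∑ r, p j r) * P - ∑ k : Fin n, ∑ r : Fin n, p j r * p k r) from
      Finset.sum_congr rfl fun j _ => by
        rw [Finset.sum_sub_distrib, ← Finset.mul_sum, hP]]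
    rw [Finset.sum_sub_distrib, ← Finset.sum_mul, ← hP]
    rw [show ∑ j : Fin n, ((∑ r, p j r) * (∑ s, p j s) - ∑ r, p j r * p j r)
        = A - Q from by
      rw [Finset.sum_sub_distrib, hA, hQ]
      congr 1
      · exact Finset.sum_congr rfl fun j _ => (sq _).symm
      · exact Finset.sum_congr rfl fun j _ => Finset.sum_congr rfl fun r _ => (sq _).symm]
    rw [hDB]
    ring
  -- numeric facts
  have hn0 : (n:ℝ) ≠ 0 := by positivity
  have hn2 : (2:ℝ) ≤ (n:ℝ) := by exact_mod_cast hn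
  have hn1 : (n:ℝ) - 1 ≠ 0 := by intro h; nlinarith
  have hF1 : (n.factorial : ℝ) = (n:ℝ) * ((n-1).factorial : ℝ) := by
    rw [← Nat.mul_factorial_pred (by omega : n ≠ 0)]
    push_cast
    ring
  have hF2 : ((n-1).factorial : ℝ) = ((n:ℝ) - 1) * ((n-2).factorial : ℝ) := by
    have h1 : (n-1) * ((n-1) - 1).factorial = (n-1).factorial :=
      Nat.mul_factorial_pred (by omega)
    have h2 : n - 1 - 1 = n - 2 := by omega
    rw [h2] at h1
    rw [← h1]
    push_cast [Nat.cast_sub (by omega : 1 ≤ n)]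
    ring
  have hFne : ((n-2).factorial : ℝ) ≠ 0 := by
    exact_mod_cast Nat.factorial_ne_zero (n-2)
  -- assemble
  rw [dVar, hE1, hE2, hTval, hF1, hF2]
  have hrhsA : ∑ j : Fin n, ((n:ℝ)⁻¹ * ∑ r : Fin n, p j r)^2 = ((n:ℝ)⁻¹)^2 * A := by
    rw [hA, Finset.mul_sum]
    exact Finset.sum_congr rfl fun j _ => by rw [mul_pow]
  have hrhsB : ∑ r : Fin n, ((n:ℝ)⁻¹ * ∑ j : Fin n, p j r)^2 = ((n:ℝ)⁻¹)^2 * B := by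
    rw [hB, Finset.mul_sum]
    exact Finset.sum_congr rfl fun r _ => by rw [mul_pow]
  rw [hrhsA, hrhsB]
  field_simp
  ring
end

section
/- Let A = λ − Var(S_n) + γ' and B = ((n-2)/n)(λ − Var(S_n)) + 2λ²/n. Then A ≤ B ≤ (3 − 2/n) A. -/
open Finset Real

section Aux
open Finset



lemma bern_sum (n : ℕ) (m : Fin n × Fin n → Bool → ℝ) :
    ∑ x : Fin n → Fin n → Bool, ∏ q : Fin n × Fin n, m q (x q.1 q.2)
      = ∏ q : Fin n × Fin n, (m q true + m q false) := by
  have h1 : ∀ q : Fin n × Fin n, m q true + m q false = ∑ b : Bool, m q b := by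
    intro q; rw [Fintype.sum_bool]
  simp_rw [h1]
  rw [Fintype.prod_sum (fun q b => m q b)]
  apply Fintype.sum_equiv (Equiv.curry (Fin n) (Fin n) Bool).symm
  intro x
  apply Finset.prod_congr rfl
  intro q _
  simp [Equiv.curry, Function.uncurry]

lemma bw_eq_prod (n : ℕ) (p : Fin n → Fin n → ℝ) (x : Fin n → Fin n → Bool) :
    bw n p x = ∏ q : Fin n × Fin n, (if x q.1 q.2 then p q.1 q.2 else 1 - p q.1 q.2) := by
  rw [bw, Fintype.prod_prod_type]

lemma bw_sum_forced (n : ℕ) (p : Fin n → Fin n → ℝ)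
    (S : Finset (Fin n × Fin n)) :
    ∑ x : Fin n → Fin n → Bool, bw n p x * ∏ q ∈ S, (if x q.1 q.2 then (1:ℝ) else 0)
      = ∏ q ∈ S, p q.1 q.2 := by
  have key : ∀ x : Fin n → Fin n → Bool,
      bw n p x * ∏ q ∈ S, (if x q.1 q.2 then (1:ℝ) else 0)
        = ∏ q : Fin n × Fin n, ((if x q.1 q.2 then p q.1 q.2 else 1 - p q.1 q.2) *
            (if q ∈ S then (if x q.1 q.2 then (1:ℝ) else 0) else 1)) := by
    intro x
    rw [Finset.prod_mul_distrib, ← bw_eq_prod, Finset.prod_ite_mem, Finset.univ_inter]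
  simp_rw [key]
  rw [bern_sum n (fun q b => (if b then p q.1 q.2 else 1 - p q.1 q.2) *
      (if q ∈ S then (if b then (1:ℝ) else 0) else 1))]
  refine Eq.trans (Finset.prod_congr rfl fun q _ => ?_)
    (by rw [Finset.prod_ite_mem, Finset.univ_inter])
  by_cases h : q ∈ S <;> simp [h]


lemma card_fiber_pair (n : ℕ) (j k : Fin n) (r s r' s' : Fin n)
    (hrs : r ≠ s) (hrs' : r' ≠ s') :
    (univ.filter fun σ : Equiv.Perm (Fin n) => σ j = r ∧ σ k = s).card =
    (univ.filter fun σ : Equiv.Perm (Fin n) => σ j = r' ∧ σ k = s').card := by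
  set t := Equiv.swap r r' s with ht_def
  set perm0 := (Equiv.swap r r').trans (Equiv.swap t s') with hperm0_def
  have htne : t ≠ r' := by
    intro h
    have := congrArg (Equiv.swap r r') h
    rw [ht_def, Equiv.swap_apply_self, Equiv.swap_apply_right] at this
    exact hrs this.symm
  have hperm0r : perm0 r = r' := by
    rw [hperm0_def]
    simp only [Equiv.trans_apply, Equiv.swap_apply_left]
    exact Equiv.swap_apply_of_ne_of_ne (Ne.symm htne) hrs'
  have hperm0s : perm0 s = s' := by
    rw [hperm0_def]
    simp only [Equiv.trans_apply, ← ht_def, Equiv.swap_apply_left]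
  apply Finset.card_bij' (fun σ _ => (perm0 : Equiv.Perm (Fin n)) * σ)
      (fun σ _ => (perm0 : Equiv.Perm (Fin n))⁻¹ * σ)
  · intro σ hσ
    simp only [mem_filter, mem_univ, true_and] at hσ ⊢
    rw [Equiv.Perm.mul_apply, Equiv.Perm.mul_apply, hσ.1, hσ.2, hperm0r, hperm0s]
    exact ⟨rfl, rfl⟩
  · intro σ hσ
    simp only [mem_filter, mem_univ, true_and] at hσ ⊢
    rw [Equiv.Perm.mul_apply, Equiv.Perm.mul_apply, hσ.1, hσ.2]
    constructor
    · rw [← hperm0r]; exact Equiv.symm_apply_apply _ _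
    · rw [← hperm0s]; exact Equiv.symm_apply_apply _ _
  · intro σ _; group
  · intro σ _; group

lemma sum_perm_pair (n : ℕ) (j k : Fin n) (hjk : j ≠ k) (g : Fin n → Fin n → ℝ) :
    ∃ c : ℕ, n * (n - 1) * c = n.factorial ∧
      ∑ σ : Equiv.Perm (Fin n), g (σ j) (σ k)
        = c * ∑ r : Fin n, ∑ s : Fin n, if r ≠ s then g r s else 0 := by
  classical
  set c := (univ.filter fun σ : Equiv.Perm (Fin n) => σ j = j ∧ σ k = k).card with hc_def
  have hfib : ∀ q : Fin n × Fin n,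
      (univ.filter fun σ : Equiv.Perm (Fin n) => (σ j, σ k) = q).card
        = if q.1 ≠ q.2 then c else 0 := by
    intro q
    have : (univ.filter fun σ : Equiv.Perm (Fin n) => (σ j, σ k) = q)
        = univ.filter fun σ : Equiv.Perm (Fin n) => σ j = q.1 ∧ σ k = q.2 := by
      apply Finset.filter_congr; intro σ _; simp [Prod.ext_iff]
    rw [this]
    by_cases hq : q.1 ≠ q.2
    · rw [if_pos hq]
      exact card_fiber_pair n j k q.1 q.2 j k hq hjk
    · rw [if_neg hq]
      push_neg at hq
      rw [Finset.card_eq_zero, Finset.filter_eq_empty_iff]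
      rintro σ - ⟨h1, h2⟩
      exact hjk (σ.injective (by rw [h1, h2, hq]))
  have hsplit : ∑ σ : Equiv.Perm (Fin n), g (σ j) (σ k)
      = ∑ q : Fin n × Fin n, ∑ σ ∈ univ.filter
          (fun σ : Equiv.Perm (Fin n) => (σ j, σ k) = q), g (σ j) (σ k) :=
    (Finset.sum_fiberwise univ (fun σ : Equiv.Perm (Fin n) => (σ j, σ k))
      (fun σ => g (σ j) (σ k))).symm
  have hinner : ∀ q : Fin n × Fin n,
      ∑ σ ∈ univ.filter (fun σ : Equiv.Perm (Fin n) => (σ j, σ k) = q), g (σ j) (σ k)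
        = (if q.1 ≠ q.2 then c else 0) * g q.1 q.2 := by
    intro q
    rw [← hfib q]
    rw [Finset.sum_congr rfl (fun σ hσ => ?_), Finset.sum_const, nsmul_eq_mul]
    simp only [mem_filter, Prod.ext_iff] at hσ
    rw [hσ.2.1, hσ.2.2]
  refine ⟨c, ?_, ?_⟩
  · have hcount : Fintype.card (Equiv.Perm (Fin n)) = ∑ q : Fin n × Fin n,
        (univ.filter fun σ : Equiv.Perm (Fin n) => (σ j, σ k) = q).card := by
      rw [← Finset.card_univ]
      exact Finset.card_eq_sum_card_fiberwise (fun σ _ => mem_univ _)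
    rw [Fintype.card_perm, Fintype.card_fin] at hcount
    simp_rw [hfib] at hcount
    rw [Finset.sum_ite, Finset.sum_const_zero, add_zero, Finset.sum_const, smul_eq_mul] at hcount
    have hcard : (univ.filter fun q : Fin n × Fin n => q.1 ≠ q.2).card = n * (n-1) := by
      have : (univ.filter fun q : Fin n × Fin n => q.1 ≠ q.2) = (univ : Finset (Fin n)).offDiag := by
        ext q; simp [Finset.mem_offDiag]
      rw [this, Finset.offDiag_card, Finset.card_univ, Fintype.card_fin]
      cases n with
      | zero => rfl
      | succ m => cases m <;> simp [Nat.mul_succ, Nat.succ_mul] <;> omega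
    rw [hcard] at hcount
    omega
  · rw [hsplit, Finset.sum_congr rfl (fun q _ => hinner q), Fintype.sum_prod_type]
    rw [Finset.mul_sum]
    apply Finset.sum_congr rfl; intro r _
    rw [Finset.mul_sum]
    apply Finset.sum_congr rfl; intro s _
    by_cases h : r ≠ s <;> simp [h]

lemma sum_perm_pair' (n : ℕ) (hn : 2 ≤ n) (j k : Fin n) (hjk : j ≠ k) (g : Fin n → Fin n → ℝ) :
    ((n.factorial : ℝ))⁻¹ * ∑ σ : Equiv.Perm (Fin n), g (σ j) (σ k)
      = ((n:ℝ) * ((n:ℝ) - 1))⁻¹ * ∑ r : Fin n, ∑ s : Fin n, if r ≠ s then g r s else 0 := by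
  obtain ⟨c, hc, hsum⟩ := sum_perm_pair n j k hjk g
  have hcast : ((n.factorial : ℝ)) = ((n:ℝ) * ((n:ℝ) - 1)) * (c:ℝ) := by
    rw [← hc]
    push_cast [Nat.cast_sub (by omega : 1 ≤ n)]
    ring
  have hc0 : (c:ℝ) ≠ 0 := by
    intro h
    rw [h, mul_zero] at hcast
    exact (Nat.cast_pos.2 n.factorial_pos).ne' hcast
  have hn0 : ((n:ℝ) * ((n:ℝ) - 1)) ≠ 0 := by
    have h2 : (2:ℝ) ≤ (n:ℝ) := by exact_mod_cast hn
    nlinarith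
  rw [hsum, hcast, mul_inv, mul_assoc, inv_mul_cancel_left₀ hc0]

lemma sum_perm_single (n : ℕ) (hn : 2 ≤ n) (j : Fin n) (f : Fin n → ℝ) :
    ((n.factorial : ℝ))⁻¹ * ∑ σ : Equiv.Perm (Fin n), f (σ j)
      = ((n:ℝ))⁻¹ * ∑ r : Fin n, f r := by
  have : Nontrivial (Fin n) := by
    rw [← Fintype.one_lt_card_iff_nontrivial, Fintype.card_fin]; omega
  obtain ⟨k, hk⟩ := exists_ne j
  have := sum_perm_pair' n hn j k (Ne.symm hk) (fun r _ => f r)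
  rw [this]
  have hinner : ∀ r : Fin n, (∑ s : Fin n, if r ≠ s then f r else 0) = ((n:ℝ) - 1) * f r := by
    intro r
    rw [Finset.sum_ite, Finset.sum_const_zero, add_zero, Finset.sum_const, nsmul_eq_mul]
    congr 1
    have : (univ.filter fun s : Fin n => r ≠ s) = univ.erase r := by
      ext s; simp [eq_comm, Ne]
    rw [this, Finset.card_erase_of_mem (mem_univ r), Finset.card_univ, Fintype.card_fin]
    push_cast [Nat.cast_sub (by omega : 1 ≤ n)]
    ring
  simp_rw [hinner]
  rw [← Finset.mul_sum, ← mul_assoc]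
  congr 1
  have h2 : (2:ℝ) ≤ (n:ℝ) := by exact_mod_cast hn
  have hne : ((n:ℝ)) * ((n:ℝ) - 1) ≠ 0 := by nlinarith
  have hn1 : (n:ℝ) - 1 ≠ 0 := by linarith
  field_simp

lemma inner1 (n : ℕ) (p : Fin n → Fin n → ℝ) (σ : Equiv.Perm (Fin n)) :
    ∑ x : Fin n → Fin n → Bool, bw n p x * dSum n x σ = ∑ j : Fin n, p j (σ j) := by
  simp_rw [dSum, Finset.mul_sum]
  rw [Finset.sum_comm]
  apply Finset.sum_congr rfl
  intro j _
  have := bw_sum_forced n p {(j, σ j)}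
  simpa using this

lemma ind_mul_ind (b : Bool) : (if b then (1:ℝ) else 0) * (if b then (1:ℝ) else 0)
    = if b then (1:ℝ) else 0 := by cases b <;> simp

lemma inner2 (n : ℕ) (p : Fin n → Fin n → ℝ) (σ : Equiv.Perm (Fin n)) :
    ∑ x : Fin n → Fin n → Bool, bw n p x * (dSum n x σ)^2
      = (∑ j : Fin n, p j (σ j)) +
        ∑ j : Fin n, ∑ k : Fin n, if j ≠ k then p j (σ j) * p k (σ k) else 0 := by
  have expand : ∀ x : Fin n → Fin n → Bool, bw n p x * (dSum n x σ)^2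
      = ∑ j : Fin n, ∑ k : Fin n,
          bw n p x * ((if x j (σ j) then (1:ℝ) else 0) * (if x k (σ k) then (1:ℝ) else 0)) := by
    intro x
    rw [sq, dSum, Finset.sum_mul_sum]
    simp_rw [Finset.mul_sum]
  simp_rw [expand]
  rw [Finset.sum_comm]
  have swap2 : ∀ j : Fin n,
      ∑ x : Fin n → Fin n → Bool, ∑ k : Fin n,
          bw n p x * ((if x j (σ j) then (1:ℝ) else 0) * (if x k (σ k) then (1:ℝ) else 0))
      = ∑ k : Fin n, ∑ x : Fin n → Fin n → Bool,
          bw n p x * ((if x j (σ j) then (1:ℝ) else 0) * (if x k (σ k) then (1:ℝ) else 0)) := by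
    intro j; rw [Finset.sum_comm]
  simp_rw [swap2]
  have key : ∀ j k : Fin n,
      ∑ x : Fin n → Fin n → Bool,
          bw n p x * ((if x j (σ j) then (1:ℝ) else 0) * (if x k (σ k) then (1:ℝ) else 0))
      = (if j = k then p j (σ j) else 0) + (if j ≠ k then p j (σ j) * p k (σ k) else 0) := by
    intro j k
    by_cases hjk : j = k
    · subst hjk
      simp only [if_pos rfl, Ne, not_true_eq_false, if_false, add_zero]
      simp_rw [ind_mul_ind]
      have := bw_sum_forced n p {(j, σ j)}
      simpa using this
    · simp only [if_neg hjk, Ne, hjk, not_false_eq_true, if_true, zero_add]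
      have hne : ((j, σ j) : Fin n × Fin n) ≠ (k, σ k) := by
        intro h; exact hjk (congrArg Prod.fst h)
      have := bw_sum_forced n p {(j, σ j), (k, σ k)}
      rw [Finset.prod_pair hne] at this
      simp_rw [Finset.prod_pair hne] at this
      simpa using this
  simp_rw [key]
  have split : ∀ j : Fin n,
      (∑ k : Fin n, ((if j = k then p j (σ j) else 0)
          + (if j ≠ k then p j (σ j) * p k (σ k) else 0)))
      = p j (σ j) + ∑ k : Fin n, (if j ≠ k then p j (σ j) * p k (σ k) else 0) := by
    intro j
    rw [Finset.sum_add_distrib, Finset.sum_ite_eq univ j (fun k => p j (σ j))]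
    simp
  simp_rw [split]
  rw [Finset.sum_add_distrib]

lemma exp_dSum (n : ℕ) (hn : 2 ≤ n) (p : Fin n → Fin n → ℝ) :
    dExp n p (dSum n) = ((n:ℝ))⁻¹ * ∑ j : Fin n, ∑ r : Fin n, p j r := by
  rw [dExp]
  simp_rw [inner1]
  rw [Finset.sum_comm, Finset.mul_sum]
  have : ∀ j : Fin n, ((n.factorial : ℝ))⁻¹ * ∑ σ : Equiv.Perm (Fin n), p j (σ j)
      = ((n:ℝ))⁻¹ * ∑ r : Fin n, p j r := fun j => sum_perm_single n hn j (p j)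
  simp_rw [this]
  rw [← Finset.mul_sum]

lemma exp_dSum_sq (n : ℕ) (hn : 2 ≤ n) (p : Fin n → Fin n → ℝ) :
    dExp n p (fun x σ => (dSum n x σ)^2)
      = ((n:ℝ))⁻¹ * (∑ j : Fin n, ∑ r : Fin n, p j r)
        + ((n:ℝ) * ((n:ℝ) - 1))⁻¹ *
          ∑ j : Fin n, ∑ k : Fin n, ∑ r : Fin n, ∑ s : Fin n,
            (if j ≠ k ∧ r ≠ s then p j r * p k s else 0) := by
  rw [dExp]
  simp_rw [inner2]
  rw [Finset.sum_add_distrib, mul_add]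
  congr 1
  · rw [Finset.sum_comm, Finset.mul_sum]
    have : ∀ j : Fin n, ((n.factorial : ℝ))⁻¹ * ∑ σ : Equiv.Perm (Fin n), p j (σ j)
        = ((n:ℝ))⁻¹ * ∑ r : Fin n, p j r := fun j => sum_perm_single n hn j (p j)
    simp_rw [this]
    rw [← Finset.mul_sum]
  · rw [Finset.sum_comm, Finset.mul_sum]
    have swap2 : ∀ j : Fin n,
        ∑ σ : Equiv.Perm (Fin n), ∑ k : Fin n, (if j ≠ k then p j (σ j) * p k (σ k) else 0)
        = ∑ k : Fin n, ∑ σ : Equiv.Perm (Fin n), (if j ≠ k then p j (σ j) * p k (σ k) else 0) := by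
      intro j; rw [Finset.sum_comm]
    simp_rw [swap2, Finset.mul_sum]
    apply Finset.sum_congr rfl; intro j _
    apply Finset.sum_congr rfl; intro k _
    rw [← Finset.mul_sum]
    by_cases hjk : j ≠ k
    · simp only [if_pos hjk]
      rw [sum_perm_pair' n hn j k hjk (fun r s => p j r * p k s), Finset.mul_sum]
      apply Finset.sum_congr rfl; intro r _
      rw [Finset.mul_sum]
      apply Finset.sum_congr rfl; intro s _
      congr 1
      by_cases hrs : r ≠ s <;> simp [hrs, hjk]
    · push_neg at hjk
      simp [hjk]


lemma posmul (x y : ℝ) : x * y ≤ max 0 x * max 0 y + max 0 (-x) * max 0 (-y) := by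
  have r1 : (0:ℝ) ≤ max 0 x * max 0 y := mul_nonneg (le_max_left _ _) (le_max_left _ _)
  have r2 : (0:ℝ) ≤ max 0 (-x) * max 0 (-y) := mul_nonneg (le_max_left _ _) (le_max_left _ _)
  rcases le_total 0 x with hx | hx <;> rcases le_total 0 y with hy | hy
  · rw [max_eq_right hx, max_eq_right hy]
    nlinarith
  · nlinarith [mul_nonneg hx (neg_nonneg.2 hy)]
  · nlinarith [mul_nonneg (neg_nonneg.2 hx) hy]
  · rw [max_eq_right (neg_nonneg.2 hx), max_eq_right (neg_nonneg.2 hy)]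
    nlinarith

lemma key_pt (a b c d : ℝ) :
    a * d + b * c - a * c - b * d ≤ max 0 (a - b) * max 0 (d - c) + max 0 (b - a) * max 0 (c - d) := by
  have := posmul (a - b) (d - c)
  rw [neg_sub, neg_sub] at this
  nlinarith [this]

lemma pair_bound (n : ℕ) (u v : Fin n → ℝ) :
    (n:ℝ) * (∑ r : Fin n, ∑ s : Fin n, if r ≠ s then u r * v s else 0)
      ≤ ((n:ℝ) - 1) * ((∑ r : Fin n, u r) * (∑ r : Fin n, v r))
        + ∑ r : Fin n, ∑ s : Fin n, if r ≠ s then max 0 (u r - u s) * max 0 (v s - v r) else 0 := by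
  have hT : (∑ r : Fin n, ∑ s : Fin n, if r ≠ s then u r * v s else 0)
      = (∑ r : Fin n, u r) * (∑ r : Fin n, v r) - ∑ r : Fin n, u r * v r := by
    have h1 : ∀ r s : Fin n, (if r ≠ s then u r * v s else 0)
        = u r * v s - (if r = s then u r * v s else 0) := by
      intro r s; by_cases h : r = s <;> simp [h]
    simp_rw [h1, Finset.sum_sub_distrib]
    congr 1
    · rw [Finset.sum_mul_sum]
    · apply Finset.sum_congr rfl; intro r _
      rw [Finset.sum_ite_eq univ r (fun s => u r * v s)]
      simp
  have hG : (∑ r : Fin n, ∑ s : Fin n, if r ≠ s then max 0 (u r - u s) * max 0 (v s - v r) else 0)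
      = ∑ r : Fin n, ∑ s : Fin n, max 0 (u r - u s) * max 0 (v s - v r) := by
    apply Finset.sum_congr rfl; intro r _
    apply Finset.sum_congr rfl; intro s _
    by_cases h : r = s <;> simp [h]
  rw [hT, hG]
  have dsum_add : ∀ F G : Fin n → Fin n → ℝ,
      (∑ r : Fin n, ∑ s : Fin n, (F r s + G r s))
        = (∑ r : Fin n, ∑ s : Fin n, F r s) + (∑ r : Fin n, ∑ s : Fin n, G r s) := by
    intro F G; simp_rw [Finset.sum_add_distrib]
  have dsum_sub : ∀ F G : Fin n → Fin n → ℝ,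
      (∑ r : Fin n, ∑ s : Fin n, (F r s - G r s))
        = (∑ r : Fin n, ∑ s : Fin n, F r s) - (∑ r : Fin n, ∑ s : Fin n, G r s) := by
    intro F G; simp_rw [Finset.sum_sub_distrib]
  have key : (∑ r : Fin n, u r) * (∑ r : Fin n, v r)
      ≤ (n:ℝ) * (∑ r : Fin n, u r * v r)
        + ∑ r : Fin n, ∑ s : Fin n, max 0 (u r - u s) * max 0 (v s - v r) := by
    have e1 : (∑ r : Fin n, u r) * (∑ r : Fin n, v r)
        = ∑ r : Fin n, ∑ s : Fin n, u r * v s := Finset.sum_mul_sum _ _ _ _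
    have e1' : (∑ r : Fin n, u r) * (∑ r : Fin n, v r)
        = ∑ r : Fin n, ∑ s : Fin n, u s * v r := by
      rw [e1, Finset.sum_comm]
    have e2 : (n:ℝ) * (∑ r : Fin n, u r * v r) = ∑ r : Fin n, ∑ s : Fin n, u r * v r := by
      rw [Finset.mul_sum]
      apply Finset.sum_congr rfl; intro r _
      rw [Finset.sum_const, Finset.card_univ, Fintype.card_fin, nsmul_eq_mul]
    have e2' : (n:ℝ) * (∑ r : Fin n, u r * v r) = ∑ r : Fin n, ∑ s : Fin n, u s * v s := by
      rw [e2, Finset.sum_comm]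
    have e3 : (∑ r : Fin n, ∑ s : Fin n, max 0 (u r - u s) * max 0 (v s - v r))
        = ∑ r : Fin n, ∑ s : Fin n, max 0 (u s - u r) * max 0 (v r - v s) := by
      rw [Finset.sum_comm]
    have big : ∑ r : Fin n, ∑ s : Fin n, ((u r * v s + u s * v r) - (u r * v r + u s * v s))
        ≤ ∑ r : Fin n, ∑ s : Fin n,
            (max 0 (u r - u s) * max 0 (v s - v r) + max 0 (u s - u r) * max 0 (v r - v s)) := by
      apply Finset.sum_le_sum; intro r _
      apply Finset.sum_le_sum; intro s _
      have := key_pt (u r) (u s) (v r) (v s)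
      nlinarith [this]
    rw [dsum_sub, dsum_add, dsum_add, dsum_add] at big
    rw [← e1, ← e1', ← e2, ← e2', ← e3] at big
    linarith
  nlinarith [key]

lemma main_bound (n : ℕ) (hn : 2 ≤ n) (p : Fin n → Fin n → ℝ)
    (hp : ∀ j r, p j r ∈ Set.Icc (0:ℝ) 1) :
    (n:ℝ)^2 * (∑ j : Fin n, ∑ k : Fin n, ∑ r : Fin n, ∑ s : Fin n,
          (if j ≠ k ∧ r ≠ s then p j r * p k s else 0))
      ≤ ((n:ℝ)-1)^2 * (∑ j : Fin n, ∑ r : Fin n, p j r)^2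
        + (n:ℝ) * (∑ j : Fin n, ∑ k : Fin n, ∑ r : Fin n, ∑ s : Fin n,
          (if j ≠ k ∧ r ≠ s then max 0 (p j r - p j s) * max 0 (p k s - p k r) else 0)) := by
  set N := (n:ℝ) with hN
  have hN2 : (2:ℝ) ≤ N := by rw [hN]; exact_mod_cast hn
  set R : Fin n → ℝ := fun j => ∑ r : Fin n, p j r with hR
  set tjk : Fin n → Fin n → ℝ :=
    fun j k => ∑ r : Fin n, ∑ s : Fin n, if r ≠ s then p j r * p k s else 0 with htjk
  set gjk : Fin n → Fin n → ℝ :=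
    fun j k => ∑ r : Fin n, ∑ s : Fin n,
      if r ≠ s then max 0 (p j r - p j s) * max 0 (p k s - p k r) else 0 with hgjk
  have hTs : (∑ j : Fin n, ∑ k : Fin n, ∑ r : Fin n, ∑ s : Fin n,
      (if j ≠ k ∧ r ≠ s then p j r * p k s else 0))
      = ∑ j : Fin n, ∑ k : Fin n, (if j ≠ k then tjk j k else 0) := by
    apply Finset.sum_congr rfl; intro j _
    apply Finset.sum_congr rfl; intro k _
    by_cases hjk : j ≠ k <;> simp [htjk, hjk]
  have hGs : (∑ j : Fin n, ∑ k : Fin n, ∑ r : Fin n, ∑ s : Fin n,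
      (if j ≠ k ∧ r ≠ s then max 0 (p j r - p j s) * max 0 (p k s - p k r) else 0))
      = ∑ j : Fin n, ∑ k : Fin n, (if j ≠ k then gjk j k else 0) := by
    apply Finset.sum_congr rfl; intro j _
    apply Finset.sum_congr rfl; intro k _
    by_cases hjk : j ≠ k <;> simp [hgjk, hjk]
  rw [hTs, hGs]
  -- step 1
  have step1 : N * (∑ j : Fin n, ∑ k : Fin n, (if j ≠ k then tjk j k else 0))
      ≤ (N - 1) * (∑ j : Fin n, ∑ k : Fin n, (if j ≠ k then R j * R k else 0))
        + ∑ j : Fin n, ∑ k : Fin n, (if j ≠ k then gjk j k else 0) := by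
    have expand : ∀ j k : Fin n, N * (if j ≠ k then tjk j k else 0)
        ≤ (N - 1) * (if j ≠ k then R j * R k else 0) + (if j ≠ k then gjk j k else 0) := by
      intro j k
      by_cases hjk : j ≠ k
      · simp only [if_pos hjk]
        exact pair_bound n (p j) (p k)
      · simp [hjk]
    calc N * (∑ j : Fin n, ∑ k : Fin n, (if j ≠ k then tjk j k else 0))
        = ∑ j : Fin n, ∑ k : Fin n, N * (if j ≠ k then tjk j k else 0) := by
          rw [Finset.mul_sum]; exact Finset.sum_congr rfl fun j _ => Finset.mul_sum _ _ _
      _ ≤ ∑ j : Fin n, ∑ k : Fin n, ((N - 1) * (if j ≠ k then R j * R k else 0)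
            + (if j ≠ k then gjk j k else 0)) := by
          exact Finset.sum_le_sum fun j _ => Finset.sum_le_sum fun k _ => expand j k
      _ = (N - 1) * (∑ j : Fin n, ∑ k : Fin n, (if j ≠ k then R j * R k else 0))
            + ∑ j : Fin n, ∑ k : Fin n, (if j ≠ k then gjk j k else 0) := by
          simp_rw [Finset.sum_add_distrib, Finset.mul_sum]
  -- step 2
  have step2 : (∑ j : Fin n, ∑ k : Fin n, (if j ≠ k then R j * R k else 0))
      = (∑ j : Fin n, R j)^2 - ∑ j : Fin n, (R j)^2 := by
    have h1 : ∀ j k : Fin n, (if j ≠ k then R j * R k else 0)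
        = R j * R k - (if j = k then R j * R k else 0) := by
      intro j k; by_cases h : j = k <;> simp [h]
    simp_rw [h1, Finset.sum_sub_distrib]
    congr 1
    · rw [sq, Finset.sum_mul_sum]
    · apply Finset.sum_congr rfl; intro j _
      rw [Finset.sum_ite_eq univ j (fun k => R j * R k)]
      simp [sq]
  -- Cauchy-Schwarz
  have hCS : (∑ j : Fin n, R j)^2 ≤ N * ∑ j : Fin n, (R j)^2 := by
    have := sq_sum_le_card_mul_sum_sq (s := (univ : Finset (Fin n))) (f := R)
    simpa [Finset.card_univ] using this
  have hS0 : (∑ j : Fin n, ∑ r : Fin n, p j r) = ∑ j : Fin n, R j := rfl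
  have hg0 : 0 ≤ ∑ j : Fin n, ∑ k : Fin n, (if j ≠ k then gjk j k else 0) := by
    apply Finset.sum_nonneg; intro j _
    apply Finset.sum_nonneg; intro k _
    by_cases hjk : j ≠ k
    · simp only [if_pos hjk, hgjk]
      apply Finset.sum_nonneg; intro r _
      apply Finset.sum_nonneg; intro s _
      by_cases hrs : r ≠ s
      · simp only [if_pos hrs]
        exact mul_nonneg (le_max_left _ _) (le_max_left _ _)
      · simp [hrs]
    · simp [hjk]
  rw [step2] at step1
  rw [hS0]
  have hNpos : (0:ℝ) < N := by linarith
  have key1 : N * (N * (∑ j : Fin n, ∑ k : Fin n, (if j ≠ k then tjk j k else 0)))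
      ≤ N * (((N - 1) * ((∑ j : Fin n, R j)^2 - ∑ j : Fin n, (R j)^2))
        + ∑ j : Fin n, ∑ k : Fin n, (if j ≠ k then gjk j k else 0)) :=
    mul_le_mul_of_nonneg_left step1 (le_of_lt hNpos)
  have key2 : 0 ≤ (N - 1) * (N * (∑ j : Fin n, (R j)^2) - (∑ j : Fin n, R j)^2) :=
    mul_nonneg (by linarith) (by linarith [hCS])
  nlinarith [key1, key2, hg0]

end Aux

theorem lemma_A_le_B_le (n : ℕ) (hn : 2 ≤ n) (p : Fin n → Fin n → ℝ)
    (hp : ∀ j r, p j r ∈ Set.Icc (0:ℝ) 1)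
    (lam : ℝ) (hlam_def : lam = (n:ℝ)⁻¹ * ∑ j : Fin n, ∑ r : Fin n, p j r)
    (hlam_pos : 0 < lam)
    (gamma' : ℝ)
    (hgamma' : gamma' = (2 / ((n:ℝ)^2 * ((n:ℝ) - 1))) *
        ∑ j : Fin n, ∑ k : Fin n, ∑ r : Fin n, ∑ s : Fin n,
          (if j ≠ k ∧ r ≠ s then max 0 (p j r - p j s) * max 0 (p k s - p k r) else 0)) :
    lam - dVar n p + gamma'
      ≤ (((n:ℝ) - 2) / n) * (lam - dVar n p) + 2 * lam^2 / n ∧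
    (((n:ℝ) - 2) / n) * (lam - dVar n p) + 2 * lam^2 / n
      ≤ (3 - 2 / (n:ℝ)) * (lam - dVar n p + gamma') := by
  have hN2 : (2:ℝ) ≤ (n:ℝ) := by exact_mod_cast hn
  have hNpos : (0:ℝ) < (n:ℝ) := by linarith
  have hN1pos : (0:ℝ) < (n:ℝ) - 1 := by linarith
  set Ts : ℝ := ∑ j : Fin n, ∑ k : Fin n, ∑ r : Fin n, ∑ s : Fin n,
      (if j ≠ k ∧ r ≠ s then p j r * p k s else 0) with hTs_def
  set Gs : ℝ := ∑ j : Fin n, ∑ k : Fin n, ∑ r : Fin n, ∑ s : Fin n,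
      (if j ≠ k ∧ r ≠ s then max 0 (p j r - p j s) * max 0 (p k s - p k r) else 0) with hGs_def
  -- G ≤ T termwise
  have hGT : Gs ≤ Ts := by
    apply Finset.sum_le_sum; intro j _
    apply Finset.sum_le_sum; intro k _
    apply Finset.sum_le_sum; intro r _
    apply Finset.sum_le_sum; intro s _
    by_cases h : j ≠ k ∧ r ≠ s
    · simp only [if_pos h]
      have h1 := (hp j r).1; have h2 := (hp j r).2
      have h3 := (hp k s).1; have h4 := (hp j s).1
      have h5 := (hp k r).1
      apply mul_le_mul
      · apply max_le h1; linarith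
      · apply max_le h3; linarith
      · exact le_max_left _ _
      · exact h1
    · simp [h]
  have hG0 : 0 ≤ Gs := by
    apply Finset.sum_nonneg; intro j _
    apply Finset.sum_nonneg; intro k _
    apply Finset.sum_nonneg; intro r _
    apply Finset.sum_nonneg; intro s _
    by_cases h : j ≠ k ∧ r ≠ s
    · simp only [if_pos h]
      exact mul_nonneg (le_max_left _ _) (le_max_left _ _)
    · simp [h]
  have hd : lam - dVar n p = lam^2 - ((n:ℝ) * ((n:ℝ) - 1))⁻¹ * Ts := by
    rw [dVar, exp_dSum n hn p, exp_dSum_sq n hn p, ← hTs_def, ← hlam_def]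
    ring
  have hmain := main_bound n hn p hp
  rw [← hTs_def, ← hGs_def] at hmain
  have hS0 : (∑ j : Fin n, ∑ r : Fin n, p j r) = (n:ℝ) * lam := by
    rw [hlam_def]; field_simp
  rw [hS0] at hmain
  have hT0 : 0 ≤ Ts := le_trans hG0 hGT
  constructor
  · rw [hd, hgamma', ← sub_nonneg]
    have expand : ((((n:ℝ) - 2) / n) * (lam^2 - ((n:ℝ) * ((n:ℝ) - 1))⁻¹ * Ts) + 2 * lam^2 / n)
        - ((lam^2 - ((n:ℝ) * ((n:ℝ) - 1))⁻¹ * Ts) + (2 / ((n:ℝ)^2 * ((n:ℝ) - 1))) * Gs)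
        = (2 * (Ts - Gs)) / ((n:ℝ)^2 * ((n:ℝ) - 1)) := by
      field_simp
      ring
    rw [expand]
    apply div_nonneg (by linarith) (by positivity)
  · rw [hd, hgamma', ← sub_nonneg]
    have expand : (3 - 2 / (n:ℝ)) * ((lam^2 - ((n:ℝ) * ((n:ℝ) - 1))⁻¹ * Ts)
          + (2 / ((n:ℝ)^2 * ((n:ℝ) - 1))) * Gs)
        - ((((n:ℝ) - 2) / n) * (lam^2 - ((n:ℝ) * ((n:ℝ) - 1))⁻¹ * Ts) + 2 * lam^2 / n)
        = (2 * (((n:ℝ)-1)^2 * ((n:ℝ)*lam)^2 + (3*(n:ℝ) - 2) * Gs - (n:ℝ)^2 * Ts))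
            / ((n:ℝ)^3 * ((n:ℝ) - 1)) := by
      field_simp
      ring
    rw [expand]
    apply div_nonneg _ (by positivity)
    nlinarith [hmain, hG0]
end

section
/- γ' ≤ (2/n)(Var(S_n) − λ + λ²), where γ' = (2/(n²(n-1))) Σ_{(j,k) distinct} Σ_{(r,s) distinct} (p_{j,r}-p_{j,s})_+ (p_{k,s}-p_{k,r})_+, λ = ES_n, and S_n is the random diagonal sum. -/
open Finset Real

section Aux

lemma sum_pi_prod {ι : Type*} [Fintype ι] [DecidableEq ι] {β : ι → Type*}
    [∀ i, Fintype (β i)] [∀ i, DecidableEq (β i)] (w : ∀ i, β i → ℝ) :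
    ∑ y : (∀ i, β i), ∏ i, w i (y i) = ∏ i, ∑ b, w i b := by
  rw [Finset.prod_univ_sum, Fintype.piFinset_univ]

lemma row_total {n : ℕ} (q : Fin n → ℝ) :
    ∑ y : Fin n → Bool, ∏ r, (if y r then q r else 1 - q r) = 1 := by
  have := sum_pi_prod (fun (r : Fin n) (b : Bool) => if b then q r else 1 - q r)
  rw [this]
  simp [Fintype.sum_bool]

lemma row_marginal {n : ℕ} (q : Fin n → ℝ) (r : Fin n) :
    ∑ y : Fin n → Bool,
      (∏ r', (if y r' then q r' else 1 - q r')) * (if y r then 1 else 0) = q r := by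
  have h : ∀ y : Fin n → Bool,
      (∏ r', (if y r' then q r' else 1 - q r')) * (if y r then 1 else 0)
      = ∏ r', ((if y r' then q r' else 1 - q r') * (if r' = r then (if y r' then (1:ℝ) else 0) else 1)) := by
    intro y
    rw [Finset.prod_mul_distrib, Finset.prod_ite_eq' univ r (fun r' => if y r' then (1:ℝ) else 0)]
    simp
  simp_rw [h]
  have := sum_pi_prod (fun (r' : Fin n) (b : Bool) =>
    (if b then q r' else 1 - q r') * (if r' = r then (if b then (1:ℝ) else 0) else 1))
  rw [this]
  have h2 : ∀ r' : Fin n, (∑ b : Bool, (if b then q r' else 1 - q r') * (if r' = r then (if b then (1:ℝ) else 0) else 1)) = if r' = r then q r' else 1 := by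
    intro r'
    by_cases hr : r' = r <;> simp [hr, Fintype.sum_bool]
  simp_rw [h2]
  rw [Finset.prod_ite_eq' univ r (fun r' => q r')]
  simp


lemma fiber_card_eq {n : ℕ} (τ : Equiv.Perm (Fin n)) (P Q : Equiv.Perm (Fin n) → Prop)
    [DecidablePred P] [DecidablePred Q]
    (h1 : ∀ σ, P σ → Q (τ * σ)) (h2 : ∀ σ, Q σ → P (τ⁻¹ * σ)) :
    (univ.filter P).card = (univ.filter Q).card := by
  apply Finset.card_bij' (fun σ _ => τ * σ) (fun σ _ => τ⁻¹ * σ)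
  · intro a ha
    simp only [mem_filter, mem_univ, true_and] at ha ⊢
    exact h1 a ha
  · intro a ha
    simp only [mem_filter, mem_univ, true_and] at ha ⊢
    exact h2 a ha
  · intro a _; group
  · intro a _; group

lemma card_fiber1 {n : ℕ} (hn : 0 < n) (j r : Fin n) :
    (univ.filter fun σ : Equiv.Perm (Fin n) => σ j = r).card = (n-1).factorial := by
  have hconst : ∀ r' : Fin n,
      (univ.filter fun σ : Equiv.Perm (Fin n) => σ j = r').card
        = (univ.filter fun σ : Equiv.Perm (Fin n) => σ j = r).card := by
    intro r'
    apply fiber_card_eq (Equiv.swap r' r)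
    · intro σ hσ
      rw [Equiv.Perm.mul_apply, hσ, Equiv.swap_apply_left]
    · intro σ hσ
      rw [Equiv.Perm.mul_apply, hσ]
      simp
  have hsum : ∑ r' : Fin n,
      (univ.filter fun σ : Equiv.Perm (Fin n) => σ j = r').card = n.factorial := by
    rw [← Finset.card_eq_sum_card_fiberwise (fun σ _ => mem_univ (σ j))]
    simp [Fintype.card_perm]
  rw [Finset.sum_congr rfl (fun r' _ => hconst r'), Finset.sum_const, Finset.card_univ,
    Fintype.card_fin, smul_eq_mul] at hsum
  exact Nat.eq_of_mul_eq_mul_left hn (hsum.trans (Nat.mul_factorial_pred hn.ne').symm)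

lemma sum_perm1 {n : ℕ} (hn : 0 < n) (f : Fin n → ℝ) (j : Fin n) :
    ∑ σ : Equiv.Perm (Fin n), f (σ j) = ((n-1).factorial : ℝ) * ∑ r, f r := by
  rw [← Finset.sum_fiberwise_of_maps_to (t := (univ : Finset (Fin n)))
    (g := fun σ : Equiv.Perm (Fin n) => σ j)
    (fun σ _ => mem_univ (σ j)) (fun σ => f (σ j)), Finset.mul_sum]
  refine Finset.sum_congr rfl fun r _ => ?_
  have hcongr : ∀ σ ∈ univ.filter fun σ : Equiv.Perm (Fin n) => σ j = r,
      f (σ j) = f r := by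
    intro σ hσ
    rw [(Finset.mem_filter.mp hσ).2]
  rw [Finset.sum_congr rfl hcongr, Finset.sum_const, card_fiber1 hn j r, nsmul_eq_mul]

lemma card_fiber2 {n : ℕ} (hn : 2 ≤ n) {j k : Fin n} (hjk : j ≠ k) {r s : Fin n} (hrs : r ≠ s) :
    (univ.filter fun σ : Equiv.Perm (Fin n) => (σ j, σ k) = (r, s)).card = (n-2).factorial := by
  have key : ∀ (r' s' : Fin n), r' ≠ s' →
      (univ.filter fun σ : Equiv.Perm (Fin n) => (σ j, σ k) = (r', s')).card
        = (univ.filter fun σ : Equiv.Perm (Fin n) => (σ j, σ k) = (r, s)).card := by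
    intro r' s' hrs'
    set τ : Equiv.Perm (Fin n) := Equiv.swap (Equiv.swap r' r s') s * Equiv.swap r' r with hτ
    have hne1 : (Equiv.swap r' r) s' ≠ r := by
      intro hc
      apply hrs'
      exact ((Equiv.swap r' r).injective (hc.trans (Equiv.swap_apply_left r' r).symm)).symm
    have hτr : τ r' = r := by
      rw [hτ, Equiv.Perm.mul_apply, Equiv.swap_apply_left]
      exact Equiv.swap_apply_of_ne_of_ne (Ne.symm hne1) hrs
    have hτs : τ s' = s := by
      rw [hτ, Equiv.Perm.mul_apply, Equiv.swap_apply_left]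
    apply fiber_card_eq τ
    · intro σ hσ
      simp only [Prod.mk.injEq] at hσ ⊢
      exact ⟨by rw [Equiv.Perm.mul_apply, hσ.1, hτr], by rw [Equiv.Perm.mul_apply, hσ.2, hτs]⟩
    · intro σ hσ
      simp only [Prod.mk.injEq] at hσ ⊢
      constructor
      · rw [Equiv.Perm.mul_apply, hσ.1, ← hτr]; simp
      · rw [Equiv.Perm.mul_apply, hσ.2, ← hτs]; simp
  have hsum : ∑ q ∈ (univ : Finset (Fin n)).offDiag,
      (univ.filter fun σ : Equiv.Perm (Fin n) => (σ j, σ k) = q).card = n.factorial := by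
    rw [← Finset.card_eq_sum_card_fiberwise
      (fun σ _ => Finset.mem_offDiag.mpr ⟨mem_univ _, mem_univ _, σ.injective.ne hjk⟩)]
    simp [Fintype.card_perm]
  rw [Finset.sum_congr rfl (fun q hq => key q.1 q.2 (Finset.mem_offDiag.mp hq).2.2),
    Finset.sum_const, Finset.offDiag_card, Finset.card_univ, Fintype.card_fin,
    smul_eq_mul] at hsum
  have h1 : 0 < n := by omega
  have h2 : 0 < n - 1 := by omega
  have hx : n * n - n = n * (n - 1) := by rw [Nat.mul_sub]; simp
  rw [hx] at hsum
  have e3 : n * (n-1) * (n-2).factorial = n.factorial := by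
    have e2 := Nat.mul_factorial_pred h2.ne'
    have hnn : n - 1 - 1 = n - 2 := by omega
    rw [mul_assoc, ← hnn, e2, Nat.mul_factorial_pred h1.ne']
  exact Nat.eq_of_mul_eq_mul_left (Nat.mul_pos h1 h2) (hsum.trans e3.symm)

lemma sum_perm2 {n : ℕ} (hn : 2 ≤ n) {j k : Fin n} (hjk : j ≠ k) (F : Fin n → Fin n → ℝ) :
    ∑ σ : Equiv.Perm (Fin n), F (σ j) (σ k)
      = ((n-2).factorial : ℝ) * ∑ q ∈ (univ : Finset (Fin n)).offDiag, F q.1 q.2 := by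
  rw [← Finset.sum_fiberwise_of_maps_to (t := (univ : Finset (Fin n)).offDiag)
    (g := fun σ : Equiv.Perm (Fin n) => (σ j, σ k))
    (fun σ _ => Finset.mem_offDiag.mpr ⟨mem_univ _, mem_univ _, σ.injective.ne hjk⟩)
    (fun σ => F (σ j) (σ k)), Finset.mul_sum]
  refine Finset.sum_congr rfl fun q hq => ?_
  have hcongr : ∀ σ ∈ univ.filter fun σ : Equiv.Perm (Fin n) => (σ j, σ k) = q,
      F (σ j) (σ k) = F q.1 q.2 := by
    intro σ hσ
    have h := (Finset.mem_filter.mp hσ).2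
    subst h
    rfl
  rw [Finset.sum_congr rfl hcongr, Finset.sum_const, nsmul_eq_mul]
  congr 1
  norm_cast
  exact card_fiber2 hn hjk (Finset.mem_offDiag.mp hq).2.2

lemma bw_total (n : ℕ) (p : Fin n → Fin n → ℝ) :
    ∑ x : Fin n → Fin n → Bool, bw n p x = 1 := by
  unfold bw
  have := sum_pi_prod (fun (j : Fin n) (y : Fin n → Bool) =>
    ∏ r, if y r then p j r else 1 - p j r)
  rw [this]
  simp [row_total]

lemma bw_marginal (n : ℕ) (p : Fin n → Fin n → ℝ) (j r : Fin n) :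
    ∑ x : Fin n → Fin n → Bool, bw n p x * (if x j r then 1 else 0) = p j r := by
  unfold bw
  have h : ∀ x : Fin n → Fin n → Bool,
      (∏ j' : Fin n, ∏ r' : Fin n, if x j' r' then p j' r' else 1 - p j' r') * (if x j r then 1 else 0)
      = ∏ j' : Fin n, ((∏ r' : Fin n, if x j' r' then p j' r' else 1 - p j' r') *
          (if j' = j then (if x j' r then (1:ℝ) else 0) else 1)) := by
    intro x
    rw [Finset.prod_mul_distrib, Finset.prod_ite_eq' univ j (fun j' => if x j' r then (1:ℝ) else 0)]
    simp
  simp_rw [h]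
  have := sum_pi_prod (fun (j' : Fin n) (y : Fin n → Bool) =>
    (∏ r' : Fin n, if y r' then p j' r' else 1 - p j' r') *
      (if j' = j then (if y r then (1:ℝ) else 0) else 1))
  rw [this]
  have h2 : ∀ j' : Fin n, (∑ y : Fin n → Bool,
      (∏ r' : Fin n, if y r' then p j' r' else 1 - p j' r') *
        (if j' = j then (if y r then (1:ℝ) else 0) else 1)) = if j' = j then p j' r else 1 := by
    intro j'
    by_cases hj : j' = j
    · simp only [hj, if_pos rfl]
      exact row_marginal (p j) r
    · simp only [hj, if_false, mul_one]
      exact row_total (p j')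
  simp_rw [h2]
  rw [Finset.prod_ite_eq' univ j (fun j' => p j' r)]
  simp

lemma bw_marginal2 (n : ℕ) (p : Fin n → Fin n → ℝ) (j k r s : Fin n) (hjk : j ≠ k) :
    ∑ x : Fin n → Fin n → Bool,
      bw n p x * ((if x j r then 1 else 0) * (if x k s then 1 else 0)) = p j r * p k s := by
  unfold bw
  have h : ∀ x : Fin n → Fin n → Bool,
      (∏ j' : Fin n, ∏ r' : Fin n, if x j' r' then p j' r' else 1 - p j' r') *
        ((if x j r then 1 else 0) * (if x k s then 1 else 0))
      = ∏ j' : Fin n, ((∏ r' : Fin n, if x j' r' then p j' r' else 1 - p j' r') *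
          ((if j' = j then (if x j' r then (1:ℝ) else 0) else 1) *
           (if j' = k then (if x j' s then (1:ℝ) else 0) else 1))) := by
    intro x
    rw [Finset.prod_mul_distrib, Finset.prod_mul_distrib,
      Finset.prod_ite_eq' univ j (fun j' => if x j' r then (1:ℝ) else 0),
      Finset.prod_ite_eq' univ k (fun j' => if x j' s then (1:ℝ) else 0)]
    simp
  simp_rw [h]
  have := sum_pi_prod (fun (j' : Fin n) (y : Fin n → Bool) =>
    (∏ r' : Fin n, if y r' then p j' r' else 1 - p j' r') *
      ((if j' = j then (if y r then (1:ℝ) else 0) else 1) *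
       (if j' = k then (if y s then (1:ℝ) else 0) else 1)))
  rw [this]
  have h2 : ∀ j' : Fin n, (∑ y : Fin n → Bool,
      (∏ r' : Fin n, if y r' then p j' r' else 1 - p j' r') *
        ((if j' = j then (if y r then (1:ℝ) else 0) else 1) *
         (if j' = k then (if y s then (1:ℝ) else 0) else 1)))
      = (if j' = j then p j' r else 1) * (if j' = k then p j' s else 1) := by
    intro j'
    by_cases hj : j' = j
    · have hk : j' ≠ k := by rw [hj]; exact hjk
      simp only [hj, if_true, eq_self_iff_true, if_neg hjk, mul_one]
      simpa using row_marginal (p j) r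
    · by_cases hk : j' = k
      · simp only [hk, if_true, eq_self_iff_true, if_neg (Ne.symm hjk), one_mul]
        simpa using row_marginal (p k) s
      · simp only [hj, hk, if_false, mul_one]
        exact row_total (p j')
  simp_rw [h2]
  rw [Finset.prod_mul_distrib, Finset.prod_ite_eq' univ j (fun j' => p j' r),
    Finset.prod_ite_eq' univ k (fun j' => p j' s)]
  simp

lemma offDiag_to_if {n : ℕ} (f : Fin n → Fin n → ℝ) :
    ∑ q ∈ (univ : Finset (Fin n)).offDiag, f q.1 q.2
      = ∑ j : Fin n, ∑ k : Fin n, if j ≠ k then f j k else 0 := by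
  rw [show (univ : Finset (Fin n)).offDiag
      = (univ ×ˢ univ).filter (fun q => q.1 ≠ q.2) from by ext q; simp [Finset.mem_offDiag],
    Finset.sum_filter, Finset.sum_product]

lemma dExp_dSum (n : ℕ) (hn0 : 0 < n) (p : Fin n → Fin n → ℝ) :
    dExp n p (dSum n) = (n:ℝ)⁻¹ * ∑ j : Fin n, ∑ r : Fin n, p j r := by
  have inner1 : ∀ σ : Equiv.Perm (Fin n),
      ∑ x : Fin n → Fin n → Bool, bw n p x * dSum n x σ = ∑ j, p j (σ j) := by
    intro σ
    unfold dSum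
    simp_rw [Finset.mul_sum]
    rw [Finset.sum_comm]
    exact Finset.sum_congr rfl fun j _ => bw_marginal n p j (σ j)
  unfold dExp
  rw [Finset.sum_congr rfl (fun σ _ => inner1 σ), Finset.sum_comm,
    Finset.sum_congr rfl (fun j _ => sum_perm1 hn0 (p j) j), ← Finset.mul_sum,
    ← mul_assoc]
  congr 1
  have hfac1 : (n:ℝ) * ((n-1).factorial : ℝ) = (n.factorial : ℝ) := by
    rw [← Nat.cast_mul, Nat.mul_factorial_pred hn0.ne']
  have ha : ((n-1).factorial : ℝ) ≠ 0 := Nat.cast_ne_zero.mpr (Nat.factorial_ne_zero _)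
  rw [← hfac1, mul_inv, mul_assoc, inv_mul_cancel₀ ha, mul_one]

lemma dExp_dSum_sq (n : ℕ) (hn : 2 ≤ n) (p : Fin n → Fin n → ℝ) :
    dExp n p (fun x σ => (dSum n x σ)^2)
      = (n:ℝ)⁻¹ * (∑ j : Fin n, ∑ r : Fin n, p j r)
        + ((n:ℝ) * ((n:ℝ)-1))⁻¹ *
          ∑ j : Fin n, ∑ k : Fin n, ∑ r : Fin n, ∑ s : Fin n,
            (if j ≠ k ∧ r ≠ s then p j r * p k s else 0) := by
  have hn0 : 0 < n := by omega
  have key : ∀ (σ : Equiv.Perm (Fin n)) (j k : Fin n),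
      ∑ x : Fin n → Fin n → Bool,
        bw n p x * ((if x j (σ j) then (1:ℝ) else 0) * (if x k (σ k) then (1:ℝ) else 0))
      = if j = k then p j (σ j) else p j (σ j) * p k (σ k) := by
    intro σ j k
    by_cases hjk : j = k
    · subst hjk
      rw [if_pos rfl]
      have hsq : ∀ x : Fin n → Fin n → Bool,
          bw n p x * ((if x j (σ j) then (1:ℝ) else 0) * (if x j (σ j) then (1:ℝ) else 0))
          = bw n p x * (if x j (σ j) then (1:ℝ) else 0) := by
        intro x; by_cases h : x j (σ j) <;> simp [h]
      rw [Finset.sum_congr rfl fun x _ => hsq x]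
      exact bw_marginal n p j (σ j)
    · rw [if_neg hjk]
      exact bw_marginal2 n p j k (σ j) (σ k) hjk
  have inner2 : ∀ σ : Equiv.Perm (Fin n),
      ∑ x : Fin n → Fin n → Bool, bw n p x * (dSum n x σ)^2
      = ∑ j, ∑ k, (if j = k then p j (σ j) else p j (σ j) * p k (σ k)) := by
    intro σ
    unfold dSum
    have expand : ∀ x : Fin n → Fin n → Bool,
        (∑ j, if x j (σ j) then (1:ℝ) else 0)^2
        = ∑ j, ∑ k, ((if x j (σ j) then (1:ℝ) else 0) * (if x k (σ k) then (1:ℝ) else 0)) := by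
      intro x; rw [sq, Finset.sum_mul_sum]
    simp_rw [expand, Finset.mul_sum]
    rw [Finset.sum_comm]
    refine Finset.sum_congr rfl fun j _ => ?_
    rw [Finset.sum_comm]
    exact Finset.sum_congr rfl fun k _ => key σ j k
  have step : ∀ j k : Fin n,
      ∑ σ : Equiv.Perm (Fin n), (if j = k then p j (σ j) else p j (σ j) * p k (σ k))
      = if j = k then ((n-1).factorial:ℝ) * ∑ r, p j r
        else ((n-2).factorial:ℝ) * ∑ q ∈ (univ : Finset (Fin n)).offDiag, p j q.1 * p k q.2 := by
    intro j k
    by_cases hjk : j = k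
    · simp only [if_pos hjk]
      exact sum_perm1 hn0 (p j) j
    · simp only [if_neg hjk]
      exact sum_perm2 hn hjk (fun r s => p j r * p k s)
  unfold dExp
  rw [Finset.sum_congr rfl (fun σ _ => inner2 σ), Finset.sum_comm]
  have swap2 : ∀ j : Fin n, ∑ σ : Equiv.Perm (Fin n), ∑ k,
      (if j = k then p j (σ j) else p j (σ j) * p k (σ k))
      = ∑ k, (if j = k then ((n-1).factorial:ℝ) * ∑ r, p j r
          else ((n-2).factorial:ℝ) * ∑ q ∈ (univ : Finset (Fin n)).offDiag, p j q.1 * p k q.2) := by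
    intro j
    rw [Finset.sum_comm]
    exact Finset.sum_congr rfl fun k _ => step j k
  rw [Finset.sum_congr rfl (fun j _ => swap2 j)]
  have split : ∀ j : Fin n, ∑ k, (if j = k then ((n-1).factorial:ℝ) * ∑ r, p j r
        else ((n-2).factorial:ℝ) * ∑ q ∈ (univ : Finset (Fin n)).offDiag, p j q.1 * p k q.2)
      = ((n-1).factorial:ℝ) * (∑ r, p j r)
        + ((n-2).factorial:ℝ) * ∑ k, ∑ r, ∑ s, (if j ≠ k ∧ r ≠ s then p j r * p k s else 0) := by
    intro j
    have ptw : ∀ k : Fin n, (if j = k then ((n-1).factorial:ℝ) * ∑ r, p j r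
          else ((n-2).factorial:ℝ) * ∑ q ∈ (univ : Finset (Fin n)).offDiag, p j q.1 * p k q.2)
        = (if j = k then ((n-1).factorial:ℝ) * ∑ r, p j r else 0)
          + ((n-2).factorial:ℝ) * ∑ r, ∑ s, (if j ≠ k ∧ r ≠ s then p j r * p k s else 0) := by
      intro k
      by_cases hjk : j = k
      · simp [hjk]
      · simp only [if_neg hjk, zero_add]
        congr 1
        rw [offDiag_to_if (fun r s => p j r * p k s)]
        refine Finset.sum_congr rfl fun r _ => Finset.sum_congr rfl fun s _ => ?_
        by_cases hrs : r = s <;> simp [hrs, hjk]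
    rw [Finset.sum_congr rfl fun k _ => ptw k, Finset.sum_add_distrib,
      Finset.sum_ite_eq univ j (fun _ => ((n-1).factorial:ℝ) * ∑ r, p j r),
      if_pos (mem_univ j), ← Finset.mul_sum]
  rw [Finset.sum_congr rfl (fun j _ => split j), Finset.sum_add_distrib,
    ← Finset.mul_sum, ← Finset.mul_sum, mul_add, ← mul_assoc, ← mul_assoc]
  have ha : ((n-1).factorial : ℝ) ≠ 0 := Nat.cast_ne_zero.mpr (Nat.factorial_ne_zero _)
  have hb : ((n-2).factorial : ℝ) ≠ 0 := Nat.cast_ne_zero.mpr (Nat.factorial_ne_zero _)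
  have hfac1 : (n:ℝ) * ((n-1).factorial : ℝ) = (n.factorial : ℝ) := by
    rw [← Nat.cast_mul, Nat.mul_factorial_pred hn0.ne']
  have hfac2 : ((n:ℝ) * ((n:ℝ)-1)) * ((n-2).factorial : ℝ) = (n.factorial : ℝ) := by
    have e3 : n * (n-1) * (n-2).factorial = n.factorial := by
      have h2 : 0 < n - 1 := by omega
      have hnn : n - 1 - 1 = n - 2 := by omega
      rw [mul_assoc, ← hnn, Nat.mul_factorial_pred h2.ne', Nat.mul_factorial_pred hn0.ne']
    have : ((n:ℝ)-1) = ((n-1 : ℕ) : ℝ) := by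
      rw [Nat.cast_sub (by omega)]; norm_num
    rw [this, ← Nat.cast_mul, ← Nat.cast_mul, e3]
  congr 1
  · congr 1
    rw [← hfac1, mul_inv, mul_assoc, inv_mul_cancel₀ ha, mul_one]
  · congr 1
    rw [← hfac2, mul_inv, mul_assoc, inv_mul_cancel₀ hb, mul_one]


end Aux

theorem gamma'_le_two_div_n_mul (n : ℕ) (hn : 2 ≤ n) (p : Fin n → Fin n → ℝ)
    (hp : ∀ j r, p j r ∈ Set.Icc (0:ℝ) 1)
    (lam : ℝ) (hlam_def : lam = (n:ℝ)⁻¹ * ∑ j : Fin n, ∑ r : Fin n, p j r) :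
    (2 / ((n:ℝ)^2 * ((n:ℝ) - 1))) *
      ∑ j : Fin n, ∑ k : Fin n, ∑ r : Fin n, ∑ s : Fin n,
        (if j ≠ k ∧ r ≠ s then max 0 (p j r - p j s) * max 0 (p k s - p k r) else 0)
    ≤ (2 / (n:ℝ)) * (dVar n p - lam + lam^2) := by
  have hn0 : 0 < n := by omega
  have hnR : (0:ℝ) < (n:ℝ) := by exact_mod_cast hn0
  have hn1 : (1:ℝ) < (n:ℝ) := by exact_mod_cast hn
  have h1 : dExp n p (dSum n) = lam := by rw [dExp_dSum n hn0 p, hlam_def]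
  have h2 : dVar n p - lam + lam^2
      = ((n:ℝ) * ((n:ℝ)-1))⁻¹ *
        ∑ j : Fin n, ∑ k : Fin n, ∑ r : Fin n, ∑ s : Fin n,
          (if j ≠ k ∧ r ≠ s then p j r * p k s else 0) := by
    unfold dVar
    rw [dExp_dSum_sq n hn p, h1, hlam_def]
    ring
  rw [h2]
  have hrhs : (2/(n:ℝ)) * (((n:ℝ)*((n:ℝ)-1))⁻¹ *
        ∑ j : Fin n, ∑ k : Fin n, ∑ r : Fin n, ∑ s : Fin n,
          (if j ≠ k ∧ r ≠ s then p j r * p k s else 0))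
      = (2/((n:ℝ)^2*((n:ℝ)-1))) *
        ∑ j : Fin n, ∑ k : Fin n, ∑ r : Fin n, ∑ s : Fin n,
          (if j ≠ k ∧ r ≠ s then p j r * p k s else 0) := by
    have hs : (2:ℝ)/(n:ℝ) * ((n:ℝ)*((n:ℝ)-1))⁻¹ = 2/((n:ℝ)^2*((n:ℝ)-1)) := by
      rw [div_eq_mul_inv, div_eq_mul_inv, mul_assoc, ← mul_inv]
      congr 2
      ring
    rw [← mul_assoc, hs]
  rw [hrhs]
  have hc : (0:ℝ) ≤ 2/((n:ℝ)^2*((n:ℝ)-1)) := by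
    apply div_nonneg (by norm_num)
    have : (0:ℝ) < (n:ℝ) - 1 := by linarith
    positivity
  apply mul_le_mul_of_nonneg_left _ hc
  refine Finset.sum_le_sum fun j _ => Finset.sum_le_sum fun k _ =>
    Finset.sum_le_sum fun r _ => Finset.sum_le_sum fun s _ => ?_
  by_cases h : j ≠ k ∧ r ≠ s
  · rw [if_pos h, if_pos h]
    apply mul_le_mul
    · exact max_le (hp j r).1 (by linarith [(hp j s).1])
    · exact max_le (hp k s).1 (by linarith [(hp k r).1])
    · exact le_max_left 0 _
    · exact (hp j r).1
  · rw [if_neg h, if_neg h]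
end
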